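/- MacMahon's Multiplication Theorem (q = 1 case): for ab-words u of degree n−1 and v of degree m−1, binom(n+m, n) · β(u) · β(v) = β(u·a·v) + β(u·b·v), where β(w) denotes the number of permutations in S_{deg(w)+1} with descent word w. -/

import Mathlib

/-- The descent word of a permutation of `Fin N`, as a list of `N−1` booleans:
`false` (= the letter `a`) records an ascent `σᵢ < σᵢ₊₁`, and
`true` (= the letter `b`) records a descent `σᵢ > σᵢ₊₁`. -/
def descWord {N : ℕ} (σ : Equiv.Perm (Fin N)) : List Bool :=
  List.ofFn fun i : Fin (N - 1) =>
    decide (σ ⟨i.1 + 1, by have := i.2; omega⟩ < σ ⟨i.1, by have := i.2; omega⟩)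

/-- `β(w)`: the number of permutations of `S_{deg w + 1}` with descent word `w`. -/
noncomputable def desNum (w : List Bool) : ℕ :=
  Nat.card {σ : Equiv.Perm (Fin (w.length + 1)) // descWord σ = w}

open Equiv Finset

lemma descWord_length {N : ℕ} (σ : Equiv.Perm (Fin N)) : (descWord σ).length = N - 1 := by
  simp [descWord]

lemma descWord_getElem {N : ℕ} (σ : Equiv.Perm (Fin N)) (i : ℕ) (h : i < N - 1) :
    (descWord σ)[i]'(by rw [descWord_length]; omega) =
      decide (σ ⟨i + 1, by omega⟩ < σ ⟨i, by omega⟩) := by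
  simp [descWord]

lemma desNum_congr (w : List Bool) (k : ℕ) (h : w.length + 1 = k) :
    desNum w = Nat.card {σ : Equiv.Perm (Fin k) // descWord σ = w} := by
  subst h; rfl

variable {n m : ℕ}

/-- Glue permutations `π` of `Fin n` and `ρ` of `Fin m` along a subset `S`
of `Fin (n+m)` of size `n`. -/
def glue (S : Finset (Fin (n + m))) (hS : S.card = n) (hS' : Sᶜ.card = m)
    (π : Equiv.Perm (Fin n)) (ρ : Equiv.Perm (Fin m)) : Equiv.Perm (Fin (n + m)) :=
  finSumFinEquiv.symm.trans <|
    (Equiv.sumCongr π ρ).trans <|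
      (Equiv.sumCongr (S.orderIsoOfFin hS).toEquiv ((Sᶜ).orderIsoOfFin hS').toEquiv).trans <|
        (Equiv.sumCongr (Equiv.refl _)
          (Equiv.subtypeEquivRight fun x => Finset.mem_compl)).trans
          (Equiv.sumCompl (· ∈ S))

lemma glue_apply_left (S : Finset (Fin (n + m))) (hS : S.card = n) (hS' : Sᶜ.card = m)
    (π : Equiv.Perm (Fin n)) (ρ : Equiv.Perm (Fin m)) (i : Fin n) :
    glue S hS hS' π ρ (Fin.castAdd m i) = (S.orderIsoOfFin hS (π i) : Fin (n + m)) := by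
  simp [glue]

lemma glue_apply_right (S : Finset (Fin (n + m))) (hS : S.card = n) (hS' : Sᶜ.card = m)
    (π : Equiv.Perm (Fin n)) (ρ : Equiv.Perm (Fin m)) (j : Fin m) :
    glue S hS hS' π ρ (Fin.natAdd n j) = ((Sᶜ).orderIsoOfFin hS' (ρ j) : Fin (n + m)) := by
  simp [glue]

lemma glue_apply_of_lt (S : Finset (Fin (n + m))) (hS : S.card = n) (hS' : Sᶜ.card = m)
    (π : Equiv.Perm (Fin n)) (ρ : Equiv.Perm (Fin m)) (k : Fin (n + m)) (hk : k.1 < n) :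
    glue S hS hS' π ρ k = (S.orderIsoOfFin hS (π ⟨k.1, hk⟩) : Fin (n + m)) := by
  have h : k = Fin.castAdd m ⟨k.1, hk⟩ := by ext; simp
  conv_lhs => rw [h]
  rw [glue_apply_left]

lemma glue_apply_of_ge (S : Finset (Fin (n + m))) (hS : S.card = n) (hS' : Sᶜ.card = m)
    (π : Equiv.Perm (Fin n)) (ρ : Equiv.Perm (Fin m)) (k : Fin (n + m)) (hk : n ≤ k.1) :
    glue S hS hS' π ρ k
      = ((Sᶜ).orderIsoOfFin hS' (ρ ⟨k.1 - n, by have := k.2; omega⟩) : Fin (n + m)) := by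
  have h : k = Fin.natAdd n ⟨k.1 - n, by have := k.2; omega⟩ := by ext; simp; omega
  conv_lhs => rw [h]
  rw [glue_apply_right]

lemma glue_lt_iff_left (S : Finset (Fin (n + m))) (hS : S.card = n) (hS' : Sᶜ.card = m)
    (π : Equiv.Perm (Fin n)) (ρ : Equiv.Perm (Fin m)) (a b : Fin (n + m))
    (ha : a.1 < n) (hb : b.1 < n) :
    glue S hS hS' π ρ a < glue S hS hS' π ρ b ↔ π ⟨a.1, ha⟩ < π ⟨b.1, hb⟩ := by
  rw [glue_apply_of_lt S hS hS' π ρ a ha, glue_apply_of_lt S hS hS' π ρ b hb,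
    Subtype.coe_lt_coe, OrderIso.lt_iff_lt]

lemma glue_lt_iff_right (S : Finset (Fin (n + m))) (hS : S.card = n) (hS' : Sᶜ.card = m)
    (π : Equiv.Perm (Fin n)) (ρ : Equiv.Perm (Fin m)) (a b : Fin (n + m))
    (ha : n ≤ a.1) (hb : n ≤ b.1) :
    glue S hS hS' π ρ a < glue S hS hS' π ρ b ↔
      ρ ⟨a.1 - n, by have := a.2; omega⟩ < ρ ⟨b.1 - n, by have := b.2; omega⟩ := by
  rw [glue_apply_of_ge S hS hS' π ρ a ha, glue_apply_of_ge S hS hS' π ρ b hb,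
    Subtype.coe_lt_coe, OrderIso.lt_iff_lt]

set_option maxHeartbeats 2000000 in
lemma descWord_glue (hn : 0 < n) (hm : 0 < m)
    (S : Finset (Fin (n + m))) (hS : S.card = n) (hS' : Sᶜ.card = m)
    (π : Equiv.Perm (Fin n)) (ρ : Equiv.Perm (Fin m)) :
    descWord (glue S hS hS' π ρ) =
      descWord π ++
        (decide (glue S hS hS' π ρ ⟨n, by omega⟩ < glue S hS hS' π ρ ⟨n - 1, by omega⟩))
          :: descWord ρ := by
  have hlen : (descWord π).length = n - 1 := descWord_length π
  apply List.ext_getElem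
  · simp [descWord_length]; omega
  intro i h1 h2
  have hi : i < n + m - 1 := by rw [descWord_length] at h1; omega
  rw [descWord_getElem _ i hi]
  rcases lt_trichotomy i (n - 1) with hcase | hcase | hcase
  · rw [List.getElem_append_left (by omega : i < (descWord π).length),
      descWord_getElem _ i (by omega)]
    apply decide_eq_decide.mpr
    exact glue_lt_iff_left S hS hS' π ρ ⟨i + 1, by omega⟩ ⟨i, by omega⟩
      (show i + 1 < n by omega) (show i < n by omega)
  · subst hcase
    rw [List.getElem_append_right (by omega : (descWord π).length ≤ n - 1)]
    simp only [hlen, Nat.sub_self, List.getElem_cons_zero]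
    apply decide_eq_decide.mpr
    have e : (⟨n - 1 + 1, by omega⟩ : Fin (n + m)) = ⟨n, by omega⟩ := Fin.ext (by simp; omega)
    rw [e]
  · rw [List.getElem_append_right (by omega : (descWord π).length ≤ i)]
    have h3 : i - (descWord π).length = (i - n) + 1 := by omega
    simp only [h3, List.getElem_cons_succ]
    rw [descWord_getElem _ (i - n) (by omega)]
    apply decide_eq_decide.mpr
    have e := glue_lt_iff_right S hS hS' π ρ ⟨i + 1, by omega⟩ ⟨i, by omega⟩
      (show n ≤ i + 1 by omega) (show n ≤ i by omega)
    refine e.trans ?_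
    constructor <;> intro h <;> convert h using 3 <;>
      first
      | exact (by omega : i - n + 1 = i + 1 - n)
      | exact (by omega : i + 1 - n = i - n + 1)

lemma glue_image (S : Finset (Fin (n + m))) (hS : S.card = n) (hS' : Sᶜ.card = m)
    (π : Equiv.Perm (Fin n)) (ρ : Equiv.Perm (Fin m)) :
    Finset.image (fun i : Fin n => glue S hS hS' π ρ (Fin.castAdd m i)) Finset.univ = S := by
  have hinj : Function.Injective fun i : Fin n => glue S hS hS' π ρ (Fin.castAdd m i) := by
    intro a b h
    have h2 := (glue S hS hS' π ρ).injective h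
    exact Fin.ext (by simpa [Fin.ext_iff] using h2)
  apply Finset.eq_of_subset_of_card_le
  · intro x hx
    simp only [Finset.mem_image, Finset.mem_univ, true_and] at hx
    obtain ⟨i, rfl⟩ := hx
    rw [glue_apply_left]
    exact Finset.coe_mem _
  · rw [Finset.card_image_of_injective _ hinj, Finset.card_univ, Fintype.card_fin]
    exact hS.le

lemma exists_glue (σ : Equiv.Perm (Fin (n + m))) :
    ∃ (S : Finset (Fin (n + m))) (hS : S.card = n) (hS' : Sᶜ.card = m)
      (π : Equiv.Perm (Fin n)) (ρ : Equiv.Perm (Fin m)), glue S hS hS' π ρ = σ := by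
  classical
  have hfinj : Function.Injective fun i : Fin n => σ (Fin.castAdd m i) := by
    intro a b h
    have h2 := σ.injective h
    exact Fin.ext (by simpa [Fin.ext_iff] using h2)
  set S : Finset (Fin (n + m)) :=
    Finset.image (fun i : Fin n => σ (Fin.castAdd m i)) Finset.univ with hSdef
  have hS : S.card = n := by
    rw [hSdef, Finset.card_image_of_injective _ hfinj, Finset.card_univ, Fintype.card_fin]
  have hS' : Sᶜ.card = m := by
    rw [Finset.card_compl, hS, Fintype.card_fin]; omega
  have hmemL : ∀ i : Fin n, σ (Fin.castAdd m i) ∈ S := fun i =>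
    Finset.mem_image_of_mem _ (Finset.mem_univ i)
  have hmemR : ∀ j : Fin m, σ (Fin.natAdd n j) ∈ Sᶜ := by
    intro j
    rw [Finset.mem_compl, hSdef]
    simp only [Finset.mem_image, Finset.mem_univ, true_and, not_exists]
    intro i hi
    have h2 := σ.injective hi
    have h3 := congrArg Fin.val h2
    simp only [Fin.coe_castAdd, Fin.coe_natAdd] at h3
    omega
  set p : Fin n → Fin n :=
    fun i => (S.orderIsoOfFin hS).symm ⟨σ (Fin.castAdd m i), hmemL i⟩ with hpdef
  have hp : Function.Injective p := by
    intro a b h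
    have h2 := congrArg (S.orderIsoOfFin hS) h
    simp only [hpdef, OrderIso.apply_symm_apply] at h2
    have h3 : σ (Fin.castAdd m a) = σ (Fin.castAdd m b) := congrArg Subtype.val h2
    have h4 := σ.injective h3
    exact Fin.ext (by simpa [Fin.ext_iff] using h4)
  set q : Fin m → Fin m :=
    fun j => ((Sᶜ).orderIsoOfFin hS').symm ⟨σ (Fin.natAdd n j), hmemR j⟩ with hqdef
  have hq : Function.Injective q := by
    intro a b h
    have h2 := congrArg ((Sᶜ).orderIsoOfFin hS') h
    simp only [hqdef, OrderIso.apply_symm_apply] at h2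
    have h3 : σ (Fin.natAdd n a) = σ (Fin.natAdd n b) := congrArg Subtype.val h2
    have h4 := σ.injective h3
    exact Fin.ext (by simpa [Fin.ext_iff] using h4)
  refine ⟨S, hS, hS', Equiv.ofBijective p (Finite.injective_iff_bijective.mp hp),
    Equiv.ofBijective q (Finite.injective_iff_bijective.mp hq), ?_⟩
  apply Equiv.ext
  intro k
  by_cases hk : k.1 < n
  · rw [glue_apply_of_lt _ _ _ _ _ _ hk]
    simp only [Equiv.ofBijective_apply, hpdef, OrderIso.apply_symm_apply]
    exact congrArg σ (Fin.ext rfl)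
  · rw [glue_apply_of_ge _ _ _ _ _ _ (by omega)]
    simp only [Equiv.ofBijective_apply, hqdef, OrderIso.apply_symm_apply]
    exact congrArg σ (Fin.ext (by simp; omega))

lemma key {n m : ℕ} (u v : List Bool) (hu : u.length + 1 = n) (hv : v.length + 1 = m) :
    Nat.card {σ : Equiv.Perm (Fin (n + m)) // ∃ x, descWord σ = u ++ x :: v} =
      (n + m).choose n *
        (Nat.card {π : Equiv.Perm (Fin n) // descWord π = u} *
          Nat.card {ρ : Equiv.Perm (Fin m) // descWord ρ = v}) := by
  classical
  have hn : 0 < n := by omega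
  have hm : 0 < m := by omega
  let f : ({S : Finset (Fin (n + m)) // S.card = n} ×
      {π : Equiv.Perm (Fin n) // descWord π = u} ×
      {ρ : Equiv.Perm (Fin m) // descWord ρ = v}) →
      {σ : Equiv.Perm (Fin (n + m)) // ∃ x, descWord σ = u ++ x :: v} :=
    fun t => ⟨glue t.1.1 t.1.2
        (by rw [Finset.card_compl, t.1.2, Fintype.card_fin]; omega) t.2.1.1 t.2.2.1,
      ⟨_, by rw [descWord_glue hn hm, t.2.1.2, t.2.2.2]⟩⟩
  have hbij : Function.Bijective f := by
    constructor
    · rintro ⟨⟨S₁, hS₁⟩, ⟨π₁, hπ₁⟩, ⟨ρ₁, hρ₁⟩⟩ ⟨⟨S₂, hS₂⟩, ⟨π₂, hπ₂⟩, ⟨ρ₂, hρ₂⟩⟩ h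
      simp only [f, Subtype.mk.injEq] at h
      have hS12 : S₁ = S₂ := by
        rw [← glue_image S₁ hS₁ _ π₁ ρ₁, ← glue_image S₂ hS₂ _ π₂ ρ₂, h]
        rw [Finset.card_compl, hS₁, Fintype.card_fin]; omega
      subst hS12
      have hπ : π₁ = π₂ := by
        apply Equiv.ext; intro i
        have h1 := congrArg (fun g : Equiv.Perm (Fin (n + m)) => g (Fin.castAdd m i)) h
        simp only [glue_apply_left] at h1
        exact (S₁.orderIsoOfFin hS₁).injective (Subtype.coe_injective h1)
      have hρ : ρ₁ = ρ₂ := by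
        apply Equiv.ext; intro j
        have h1 := congrArg (fun g : Equiv.Perm (Fin (n + m)) => g (Fin.natAdd n j)) h
        simp only [glue_apply_right] at h1
        exact ((S₁ᶜ).orderIsoOfFin _).injective (Subtype.coe_injective h1)
      subst hπ; subst hρ
      rfl
    · rintro ⟨σ, x, hx⟩
      obtain ⟨S, hS, hS', π, ρ, hglue⟩ := exists_glue σ
      have hdw : descWord (glue S hS hS' π ρ) = u ++ x :: v := by rw [hglue, hx]
      rw [descWord_glue hn hm] at hdw
      have hlen : (descWord π).length = u.length := by rw [descWord_length]; omega
      obtain ⟨hπu, hcons⟩ := List.append_inj hdw hlen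
      injection hcons with _ hρv
      refine ⟨⟨⟨S, hS⟩, ⟨π, hπu⟩, ⟨ρ, hρv⟩⟩, ?_⟩
      exact Subtype.ext hglue
  rw [Nat.card_congr (Equiv.ofBijective f hbij).symm, Nat.card_prod, Nat.card_prod,
    Nat.card_eq_fintype_card (α := {S : Finset (Fin (n + m)) // S.card = n}),
    Fintype.card_finset_len, Fintype.card_fin]

lemma split (u v : List Bool) {k : ℕ} :
    Nat.card {σ : Equiv.Perm (Fin k) // ∃ x, descWord σ = u ++ x :: v} =
      Nat.card {σ : Equiv.Perm (Fin k) // descWord σ = u ++ false :: v} +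
        Nat.card {σ : Equiv.Perm (Fin k) // descWord σ = u ++ true :: v} := by
  classical
  have e1 : {σ : Equiv.Perm (Fin k) // ∃ x, descWord σ = u ++ x :: v} ≃
      {σ : Equiv.Perm (Fin k) //
        descWord σ = u ++ false :: v ∨ descWord σ = u ++ true :: v} :=
    Equiv.subtypeEquivRight fun σ => by
      constructor
      · rintro ⟨x, hx⟩
        cases x
        · exact Or.inl hx
        · exact Or.inr hx
      · rintro (h | h)
        exacts [⟨false, h⟩, ⟨true, h⟩]
  have hdis : Disjoint (fun σ : Equiv.Perm (Fin k) => descWord σ = u ++ false :: v)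
      (fun σ : Equiv.Perm (Fin k) => descWord σ = u ++ true :: v) := by
    rw [Pi.disjoint_iff]
    intro σ
    rw [Prop.disjoint_iff]
    rintro ⟨h1, h2⟩
    rw [h1] at h2
    simp at h2
  haveI : Finite {σ : Equiv.Perm (Fin k) // descWord σ = u ++ false :: v} :=
    Subtype.finite
  haveI : Finite {σ : Equiv.Perm (Fin k) // descWord σ = u ++ true :: v} :=
    Subtype.finite
  rw [Nat.card_congr (e1.trans (subtypeOrEquiv _ _ hdis)), Nat.card_sum]

theorem stmt_7 (u v : List Bool) :
    Nat.choose (u.length + 1 + (v.length + 1)) (u.length + 1) * (desNum u * desNum v) =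
      desNum (u ++ false :: v) + desNum (u ++ true :: v) := by
  have h1 : desNum (u ++ false :: v) =
      Nat.card {σ : Equiv.Perm (Fin (u.length + 1 + (v.length + 1))) //
        descWord σ = u ++ false :: v} :=
    desNum_congr _ _ (by simp; omega)
  have h2 : desNum (u ++ true :: v) =
      Nat.card {σ : Equiv.Perm (Fin (u.length + 1 + (v.length + 1))) //
        descWord σ = u ++ true :: v} :=
    desNum_congr _ _ (by simp; omega)
  rw [h1, h2, ← split u v, key u v rfl rfl]
  rfl
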